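/- Let A be a lattice with a least element 0 such that for every lattice L with a least element, the tensor product A⊗L is a lattice. Then A is locally finite, i.e., every finitely generated sublattice of A is finite. -/
import Mathlib


/-! Tensor products of lattices with zero: bi-ideals, pure tensors,
compact bi-ideals, capped bi-ideals. -/

universe u v

section TensorDefs

variable {A : Type u} {B : Type v}

/-- The set `⊥_{A,B} = (A × {0}) ∪ ({0} × B)`. -/
def tensorBot (A : Type u) (B : Type v) [Lattice A] [OrderBot A]
    [Lattice B] [OrderBot B] : Set (A × B) :=
  {p | p.1 = ⊥ ∨ p.2 = ⊥}

/-- A bi-ideal of `A × B`: a down-set containing `⊥_{A,B}` and closed under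
lateral joins. -/
def IsBiIdeal [Lattice A] [OrderBot A] [Lattice B] [OrderBot B]
    (I : Set (A × B)) : Prop :=
  tensorBot A B ⊆ I ∧
  (∀ p ∈ I, ∀ q : A × B, q.1 ≤ p.1 → q.2 ≤ p.2 → q ∈ I) ∧
  (∀ a : A, ∀ b b' : B, (a, b) ∈ I → (a, b') ∈ I → (a, b ⊔ b') ∈ I) ∧
  (∀ a a' : A, ∀ b : B, (a, b) ∈ I → (a', b) ∈ I → (a ⊔ a', b) ∈ I)

/-- The pure tensor `a ⊗ b = ⊥_{A,B} ∪ {(x,y) : x ≤ a ∧ y ≤ b}`. -/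
def pureTensor [Lattice A] [OrderBot A] [Lattice B] [OrderBot B]
    (a : A) (b : B) : Set (A × B) :=
  tensorBot A B ∪ {p | p.1 ≤ a ∧ p.2 ≤ b}

/-- The smallest bi-ideal of `A × B` containing a given set, i.e. the join in the
lattice `A ⊗̄ B` of bi-ideals of the pure tensors contained in it. -/
def biIdealGen [Lattice A] [OrderBot A] [Lattice B] [OrderBot B]
    (S : Set (A × B)) : Set (A × B) :=
  ⋂₀ {I : Set (A × B) | IsBiIdeal I ∧ S ⊆ I}

/-- The compact elements of `A ⊗̄ B` are exactly the bi-ideals that are finite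
joins of pure tensors; these form the tensor product `A ⊗ B`. -/
def IsCompactBiIdeal [Lattice A] [OrderBot A] [Lattice B] [OrderBot B]
    (I : Set (A × B)) : Prop :=
  ∃ s : Finset (A × B), I = biIdealGen (⋃ p ∈ s, pureTensor p.1 p.2)

/-- `A ⊗ B` is a lattice iff the intersection of any two compact bi-ideals is
compact. -/
def TensorIsLattice (A : Type u) (B : Type v) [Lattice A] [OrderBot A]
    [Lattice B] [OrderBot B] : Prop :=
  ∀ I J : Set (A × B), IsCompactBiIdeal I → IsCompactBiIdeal J →
    IsCompactBiIdeal (I ∩ J)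

/-- A bi-ideal is capped if it is the down-set generated by `Γ ∪ ⊥_{A,B}` for some
finite `Γ ⊆ A × B`. -/
def IsCappedBiIdeal [Lattice A] [OrderBot A] [Lattice B] [OrderBot B]
    (I : Set (A × B)) : Prop :=
  ∃ Γ : Finset (A × B),
    I = tensorBot A B ∪ {q : A × B | ∃ p ∈ Γ, q.1 ≤ p.1 ∧ q.2 ≤ p.2}

/-- `A ⊗ B` is a capped tensor product if every element of `A ⊗ B` (i.e. every
compact bi-ideal of `A × B`) is capped. -/
def IsCappedTensorProduct (A : Type u) (B : Type v) [Lattice A] [OrderBot A]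
    [Lattice B] [OrderBot B] : Prop :=
  ∀ I : Set (A × B), IsCompactBiIdeal I → IsCappedBiIdeal I

end TensorDefs
/-- A lattice is locally finite if each of its finitely generated sublattices is
finite. -/
def IsLocallyFiniteLattice (A : Type u) [Lattice A] : Prop :=
  ∀ s : Finset A, (latticeClosure (s : Set A)).Finite


/-! ### Auxiliary development for the proof -/

namespace GWfree

/-! ### A Whitman-style free lattice calculus on `Option (Fin n)` variables -/

inductive FT (n : ℕ) : Type
  | var : Option (Fin n) → FT n
  | jn  : FT n → FT n → FT n
  | mt  : FT n → FT n → FT n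

namespace FT

variable {n : ℕ}

def sz : FT n → ℕ
  | var _ => 1
  | jn a b => sz a + sz b + 1
  | mt a b => sz a + sz b + 1

@[simp] lemma sz_var (x : Option (Fin n)) : sz (var x) = 1 := rfl
@[simp] lemma sz_jn (a b : FT n) : sz (jn a b) = sz a + sz b + 1 := rfl
@[simp] lemma sz_mt (a b : FT n) : sz (mt a b) = sz a + sz b + 1 := rfl

inductive Le : FT n → FT n → Prop
  | var_refl (x) : Le (var x) (var x)
  | jn_le {a b c} : Le a c → Le b c → Le (jn a b) c
  | le_mt {a b c} : Le a b → Le a c → Le a (mt b c)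
  | mt_le_l {a b c} : Le a c → Le (mt a b) c
  | mt_le_r {a b c} : Le b c → Le (mt a b) c
  | le_jn_l {a b c} : Le a b → Le a (jn b c)
  | le_jn_r {a b c} : Le a c → Le a (jn b c)

lemma Le.rfl : ∀ p : FT n, Le p p
  | var x => .var_refl x
  | jn a b => .jn_le (.le_jn_l (Le.rfl a)) (.le_jn_r (Le.rfl b))
  | mt a b => .le_mt (.mt_le_l (Le.rfl a)) (.mt_le_r (Le.rfl b))

lemma le_trans_aux : ∀ (N : ℕ) (p q r : FT n), sz p + sz q + sz r ≤ N →
    Le p q → Le q r → Le p r := by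
  intro N
  induction N with
  | zero =>
    intro p q r h
    cases p <;> simp at h
  | succ N ih =>
    intro p q r hN h1 h2
    cases h1 with
    | var_refl x => exact h2
    | jn_le ha hb =>
      exact .jn_le (ih _ _ _ (by simp at hN ⊢; omega) ha h2)
        (ih _ _ _ (by simp at hN ⊢; omega) hb h2)
    | mt_le_l ha => exact .mt_le_l (ih _ _ _ (by simp at hN ⊢; omega) ha h2)
    | mt_le_r hb => exact .mt_le_r (ih _ _ _ (by simp at hN ⊢; omega) hb h2)
    | le_mt hb hc =>
      cases h2 with
      | mt_le_l h2a => exact ih _ _ _ (by simp at hN ⊢; omega) hb h2a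
      | mt_le_r h2a => exact ih _ _ _ (by simp at hN ⊢; omega) hc h2a
      | le_mt h2a h2b =>
        exact .le_mt (ih _ _ _ (by simp at hN ⊢; omega) (.le_mt hb hc) h2a)
          (ih _ _ _ (by simp at hN ⊢; omega) (.le_mt hb hc) h2b)
      | le_jn_l h2a => exact .le_jn_l (ih _ _ _ (by simp at hN ⊢; omega) (.le_mt hb hc) h2a)
      | le_jn_r h2a => exact .le_jn_r (ih _ _ _ (by simp at hN ⊢; omega) (.le_mt hb hc) h2a)
    | le_jn_l ha =>
      cases h2 with
      | jn_le h2a h2b => exact ih _ _ _ (by simp at hN ⊢; omega) ha h2a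
      | le_mt h2a h2b =>
        exact .le_mt (ih _ _ _ (by simp at hN ⊢; omega) (.le_jn_l ha) h2a)
          (ih _ _ _ (by simp at hN ⊢; omega) (.le_jn_l ha) h2b)
      | le_jn_l h2a => exact .le_jn_l (ih _ _ _ (by simp at hN ⊢; omega) (.le_jn_l ha) h2a)
      | le_jn_r h2a => exact .le_jn_r (ih _ _ _ (by simp at hN ⊢; omega) (.le_jn_l ha) h2a)
    | le_jn_r ha =>
      cases h2 with
      | jn_le h2a h2b => exact ih _ _ _ (by simp at hN ⊢; omega) ha h2b
      | le_mt h2a h2b =>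
        exact .le_mt (ih _ _ _ (by simp at hN ⊢; omega) (.le_jn_r ha) h2a)
          (ih _ _ _ (by simp at hN ⊢; omega) (.le_jn_r ha) h2b)
      | le_jn_l h2a => exact .le_jn_l (ih _ _ _ (by simp at hN ⊢; omega) (.le_jn_r ha) h2a)
      | le_jn_r h2a => exact .le_jn_r (ih _ _ _ (by simp at hN ⊢; omega) (.le_jn_r ha) h2a)

lemma Le.trans {p q r : FT n} (h1 : Le p q) (h2 : Le q r) : Le p r :=
  le_trans_aux (sz p + sz q + sz r) p q r le_rfl h1 h2


end FT

open FT

instance ftSetoid (n : ℕ) : Setoid (FT n) where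
  r p q := Le p q ∧ Le q p
  iseqv := ⟨fun p => ⟨Le.rfl p, Le.rfl p⟩, fun h => ⟨h.2, h.1⟩,
    fun h1 h2 => ⟨h1.1.trans h2.1, h2.2.trans h1.2⟩⟩

def FL (n : ℕ) : Type := Quotient (ftSetoid n)

namespace FL
variable {n : ℕ}

def mk (p : FT n) : FL n := Quotient.mk _ p

instance : Lattice (FL n) where
  le := Quotient.lift₂ (fun p q => Le p q) (by
    intro a b a' b' ha hb
    exact propext ⟨fun h => (ha.2.trans h).trans hb.1, fun h => (ha.1.trans h).trans hb.2⟩)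
  le_refl := by rintro ⟨p⟩; exact Le.rfl p
  le_trans := by rintro ⟨p⟩ ⟨q⟩ ⟨r⟩ h1 h2; exact Le.trans h1 h2
  le_antisymm := by rintro ⟨p⟩ ⟨q⟩ h1 h2; exact Quotient.sound ⟨h1, h2⟩
  sup := Quotient.map₂ jn (by
    intro a a' ha b b' hb
    exact ⟨.jn_le (ha.1.trans (.le_jn_l (Le.rfl _))) (hb.1.trans (.le_jn_r (Le.rfl _))),
      .jn_le (ha.2.trans (.le_jn_l (Le.rfl _))) (hb.2.trans (.le_jn_r (Le.rfl _)))⟩)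
  le_sup_left := by rintro ⟨p⟩ ⟨q⟩; exact .le_jn_l (Le.rfl p)
  le_sup_right := by rintro ⟨p⟩ ⟨q⟩; exact .le_jn_r (Le.rfl q)
  sup_le := by rintro ⟨p⟩ ⟨q⟩ ⟨r⟩ h1 h2; exact .jn_le h1 h2
  inf := Quotient.map₂ mt (by
    intro a a' ha b b' hb
    exact ⟨.le_mt (Le.mt_le_l ha.1) (Le.mt_le_r hb.1),
      .le_mt (Le.mt_le_l ha.2) (Le.mt_le_r hb.2)⟩)
  inf_le_left := by rintro ⟨p⟩ ⟨q⟩; exact .mt_le_l (Le.rfl p)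
  inf_le_right := by rintro ⟨p⟩ ⟨q⟩; exact .mt_le_r (Le.rfl q)
  le_inf := by rintro ⟨p⟩ ⟨q⟩ ⟨r⟩ h1 h2; exact .le_mt h1 h2

@[simp] lemma mk_le_mk {p q : FT n} : mk p ≤ mk q ↔ Le p q := Iff.rfl
@[simp] lemma mk_sup_mk {p q : FT n} : mk p ⊔ mk q = mk (jn p q) := rfl
@[simp] lemma mk_inf_mk {p q : FT n} : mk p ⊓ mk q = mk (mt p q) := rfl

lemma ind {motive : FL n → Prop} (h : ∀ p, motive (mk p)) : ∀ x, motive x := by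
  rintro ⟨p⟩; exact h p

/-- Whitman's condition, by inversion of the calculus. -/
lemma whitman {a b c d : FL n} (h : a ⊓ b ≤ c ⊔ d) :
    a ≤ c ⊔ d ∨ b ≤ c ⊔ d ∨ a ⊓ b ≤ c ∨ a ⊓ b ≤ d := by
  induction a using ind with | _ pa =>
  induction b using ind with | _ pb =>
  induction c using ind with | _ pc =>
  induction d using ind with | _ pd =>
  rw [mk_inf_mk, mk_sup_mk] at h
  rw [mk_inf_mk, mk_sup_mk]
  cases h with
  | mt_le_l h' => exact Or.inl h'
  | mt_le_r h' => exact Or.inr (Or.inl h')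
  | le_jn_l h' => exact Or.inr (Or.inr (Or.inl h'))
  | le_jn_r h' => exact Or.inr (Or.inr (Or.inr h'))

section Eval
variable {Λ : Type*} [Lattice Λ] (f : Option (Fin n) → Λ)

def ev : FT n → Λ
  | .var o => f o
  | .jn a b => ev a ⊔ ev b
  | .mt a b => ev a ⊓ ev b

lemma ev_mono {p q : FT n} (h : Le p q) : ev f p ≤ ev f q := by
  induction h with
  | var_refl x => exact le_rfl
  | jn_le _ _ iha ihb => exact sup_le iha ihb
  | le_mt _ _ iha ihb => exact le_inf iha ihb
  | mt_le_l _ ih => exact inf_le_left.trans ih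
  | mt_le_r _ ih => exact inf_le_right.trans ih
  | le_jn_l _ ih => exact ih.trans le_sup_left
  | le_jn_r _ ih => exact ih.trans le_sup_right

def evq : FL n → Λ :=
  Quotient.lift (ev f) fun _ _ h => le_antisymm (ev_mono f h.1) (ev_mono f h.2)

@[simp] lemma evq_mk (p : FT n) : evq f (mk p) = ev f p := rfl

lemma evq_mono {x y : FL n} (h : x ≤ y) : evq f x ≤ evq f y := by
  induction x using ind with | _ p =>
  induction y using ind with | _ q =>
  exact ev_mono f h

@[simp] lemma evq_sup (x y : FL n) : evq f (x ⊔ y) = evq f x ⊔ evq f y := by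
  induction x using ind with | _ p =>
  induction y using ind with | _ q =>
  rfl

@[simp] lemma evq_inf (x y : FL n) : evq f (x ⊓ y) = evq f x ⊓ evq f y := by
  induction x using ind with | _ p =>
  induction y using ind with | _ q =>
  rfl

end Eval

end FL

end GWfree




namespace GWbi

variable {A : Type u} {B : Type v} [Lattice A] [OrderBot A] [Lattice B] [OrderBot B]

lemma subset_biIdealGen {S : Set (A × B)} : S ⊆ biIdealGen S := by
  intro z hz I hI
  exact hI.2 hz

lemma biIdealGen_min {S I : Set (A × B)} (hI : IsBiIdeal I) (hS : S ⊆ I) :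
    biIdealGen S ⊆ I :=
  Set.sInter_subset_of_mem ⟨hI, hS⟩

lemma isBiIdeal_sInter {𝒮 : Set (Set (A × B))} (h : ∀ I ∈ 𝒮, IsBiIdeal I) :
    IsBiIdeal (⋂₀ 𝒮) := by
  refine ⟨?_, ?_, ?_, ?_⟩
  · intro z hz I hI; exact (h I hI).1 hz
  · intro p hp q h1 h2 I hI; exact (h I hI).2.1 p (hp I hI) q h1 h2
  · intro a b b' h1 h2 I hI; exact (h I hI).2.2.1 a b b' (h1 I hI) (h2 I hI)
  · intro a a' b h1 h2 I hI; exact (h I hI).2.2.2 a a' b (h1 I hI) (h2 I hI)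

lemma isBiIdeal_biIdealGen (S : Set (A × B)) : IsBiIdeal (biIdealGen S) :=
  isBiIdeal_sInter fun _ hI => hI.1

lemma IsBiIdeal.inter {I J : Set (A × B)} (hI : IsBiIdeal I) (hJ : IsBiIdeal J) :
    IsBiIdeal (I ∩ J) := by
  refine ⟨fun z hz => ⟨hI.1 hz, hJ.1 hz⟩, ?_, ?_, ?_⟩
  · intro p hp q h1 h2; exact ⟨hI.2.1 p hp.1 q h1 h2, hJ.2.1 p hp.2 q h1 h2⟩
  · intro a b b' h1 h2; exact ⟨hI.2.2.1 a b b' h1.1 h2.1, hJ.2.2.1 a b b' h1.2 h2.2⟩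
  · intro a a' b h1 h2; exact ⟨hI.2.2.2 a a' b h1.1 h2.1, hJ.2.2.2 a a' b h1.2 h2.2⟩

lemma mem_pureTensor_self (a : A) (b : B) : (a, b) ∈ pureTensor a b :=
  Or.inr ⟨le_rfl, le_rfl⟩

lemma isBiIdeal_pureTensor (a : A) (b : B) : IsBiIdeal (pureTensor a b) := by
  refine ⟨Set.subset_union_left, ?_, ?_, ?_⟩
  · rintro p (hp | ⟨h1, h2⟩) q hq1 hq2
    · rcases hp with h | h
      · exact Or.inl (Or.inl (le_bot_iff.1 (h ▸ hq1)))
      · exact Or.inl (Or.inr (le_bot_iff.1 (h ▸ hq2)))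
    · exact Or.inr ⟨hq1.trans h1, hq2.trans h2⟩
  · rintro x y y' (h1 | ⟨h1a, h1b⟩) (h2 | ⟨h2a, h2b⟩)
    · rcases h1 with h | h
      · exact Or.inl (Or.inl h)
      · rcases h2 with h' | h'
        · exact Or.inl (Or.inl h')
        · obtain rfl : y = ⊥ := h
          obtain rfl : y' = ⊥ := h'
          exact Or.inl (Or.inr (by simp))
    · rcases h1 with h | h
      · exact Or.inl (Or.inl h)
      · obtain rfl : y = ⊥ := h
        exact Or.inr ⟨h2a, by simpa using h2b⟩
    · rcases h2 with h | h
      · exact Or.inl (Or.inl h)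
      · obtain rfl : y' = ⊥ := h
        exact Or.inr ⟨h1a, by simpa using h1b⟩
    · exact Or.inr ⟨h1a, sup_le h1b h2b⟩
  · rintro x x' y (h1 | ⟨h1a, h1b⟩) (h2 | ⟨h2a, h2b⟩)
    · rcases h1 with h | h
      · rcases h2 with h' | h'
        · obtain rfl : x = ⊥ := h
          obtain rfl : x' = ⊥ := h'
          exact Or.inl (Or.inl (by simp))
        · exact Or.inl (Or.inr h')
      · exact Or.inl (Or.inr h)
    · rcases h1 with h | h
      · obtain rfl : x = ⊥ := h
        exact Or.inr ⟨by simpa using h2a, h2b⟩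
      · exact Or.inl (Or.inr h)
    · rcases h2 with h | h
      · obtain rfl : x' = ⊥ := h
        exact Or.inr ⟨by simpa using h1a, h1b⟩
      · exact Or.inl (Or.inr h)
    · exact Or.inr ⟨sup_le h1a h2a, h1b⟩

lemma biIdealGen_pureTensor (a : A) (b : B) :
    biIdealGen (pureTensor a b) = pureTensor a b :=
  le_antisymm (biIdealGen_min (isBiIdeal_pureTensor a b) le_rfl) subset_biIdealGen

end GWbi

-- (appended after parts 1-3 in the dev file)
set_option linter.unusedSectionVars false
namespace GWmain

open GWfree GWbi

variable {A : Type u} [Lattice A] [OrderBot A]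

/-- The witness lattice: `WithBot` of the order dual of the free-lattice calculus. -/
abbrev LB (n : ℕ) : Type v := ULift.{v} (WithBot ((FL n)ᵒᵈ))

/-- Embedding of `FL n` into `LB n` (order-reversing). -/
def em {n : ℕ} (m : FL n) : LB.{v} n :=
  ULift.up ((OrderDual.toDual m : (FL n)ᵒᵈ) : WithBot ((FL n)ᵒᵈ))

@[simp] lemma em_le_em {n : ℕ} {m m' : FL n} : em.{v} m ≤ em m' ↔ m' ≤ m := by
  simp [em]

lemma em_inj {n : ℕ} {m m' : FL n} (h : em.{v} m = em m') : m = m' :=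
  le_antisymm (em_le_em.1 h.ge) (em_le_em.1 h.le)

lemma em_ne_bot {n : ℕ} (m : FL n) : em.{v} m ≠ ⊥ := by
  intro h
  have h2 := congrArg ULift.down h
  exact WithBot.coe_ne_bot h2

lemma lb_cases {n : ℕ} (y : LB.{v} n) : y = ⊥ ∨ ∃ m, y = em m := by
  obtain ⟨d⟩ := y
  cases d with
  | bot => exact Or.inl rfl
  | coe d => exact Or.inr ⟨OrderDual.ofDual d, rfl⟩

lemma em_sup {n : ℕ} (m m' : FL n) : em.{v} m ⊔ em m' = em (m ⊓ m') := by
  show ULift.up _ = _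
  rw [em, em, em, ← WithBot.coe_sup]
  rfl

/-- Generic bi-ideal criterion for sets of the form `⊥ ∪ {(x, em m) | C x m}`. -/
lemma isBiIdeal_emSet {n : ℕ} (C : A → FL n → Prop)
    (hdx : ∀ {x x' : A} {m : FL n}, C x m → x' ≤ x → C x' m)
    (hdm : ∀ {x : A} {m m' : FL n}, C x m → m ≤ m' → C x m')
    (hsup : ∀ {x x' : A} {m : FL n}, C x m → C x' m → C (x ⊔ x') m)
    (hinf : ∀ {x : A} {m m' : FL n}, C x m → C x m' → C x (m ⊓ m')) :
    IsBiIdeal (tensorBot A (LB.{v} n) ∪ {z | ∃ m, z.2 = em m ∧ C z.1 m}) := by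
  refine ⟨Set.subset_union_left, ?_, ?_, ?_⟩
  · -- down-set
    rintro p (hp | ⟨m, hp2, hpC⟩) q hq1 hq2
    · rcases hp with h | h
      · exact Or.inl (Or.inl (le_bot_iff.1 (h ▸ hq1)))
      · exact Or.inl (Or.inr (le_bot_iff.1 (h ▸ hq2)))
    · rcases lb_cases q.2 with h | ⟨m', hm'⟩
      · exact Or.inl (Or.inr h)
      · refine Or.inr ⟨m', hm', ?_⟩
        rw [hp2, hm'] at hq2
        exact hdm (hdx hpC hq1) (em_le_em.1 hq2)
  · -- lateral join in the second coordinate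
    rintro a b b' (hp | ⟨m, hp2, hpC⟩) (hq | ⟨m', hq2, hqC⟩)
    · rcases hp with h | h
      · exact Or.inl (Or.inl h)
      · rcases hq with h' | h'
        · exact Or.inl (Or.inl h')
        · obtain rfl : b = ⊥ := h
          obtain rfl : b' = ⊥ := h'
          exact Or.inl (Or.inr (by simp))
    · rcases hp with h | h
      · exact Or.inl (Or.inl h)
      · obtain rfl : b = ⊥ := h
        exact Or.inr ⟨m', by simpa using hq2, hqC⟩
    · rcases hq with h | h
      · exact Or.inl (Or.inl h)
      · obtain rfl : b' = ⊥ := h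
        exact Or.inr ⟨m, by simpa using hp2, hpC⟩
    · refine Or.inr ⟨m ⊓ m', ?_, hinf hpC hqC⟩
      have hb : b = em.{v} m := hp2
      have hb' : b' = em.{v} m' := hq2
      show b ⊔ b' = _
      rw [hb, hb', em_sup]
  · -- lateral join in the first coordinate
    rintro a a' b (hp | ⟨m, hp2, hpC⟩) (hq | ⟨m', hq2, hqC⟩)
    · rcases hp with h | h
      · rcases hq with h' | h'
        · obtain rfl : a = ⊥ := h
          obtain rfl : a' = ⊥ := h'
          exact Or.inl (Or.inl (by simp))
        · exact Or.inl (Or.inr h')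
      · exact Or.inl (Or.inr h)
    · rcases hp with h | h
      · obtain rfl : a = ⊥ := h
        exact Or.inr ⟨m', hq2, by simpa using hqC⟩
      · exact Or.inl (Or.inr h)
    · rcases hq with h | h
      · obtain rfl : a' = ⊥ := h
        exact Or.inr ⟨m, hp2, by simpa using hpC⟩
      · exact Or.inl (Or.inr h)
    · have : m = m' := em_inj (hp2.symm.trans hq2)
      exact Or.inr ⟨m, hp2, hsup hpC (this ▸ hqC)⟩

section Main

variable {n : ℕ} (g : Fin n → A) (hn : 0 < n)

/-- bottom of the generated sublattice -/
noncomputable def oA : A := Finset.univ.inf' ⟨⟨0, hn⟩, Finset.mem_univ _⟩ g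

/-- top of the generated sublattice -/
noncomputable def eA : A := Finset.univ.sup' ⟨⟨0, hn⟩, Finset.mem_univ _⟩ g

noncomputable def fA : Option (Fin n) → A := fun x => x.elim (oA g hn) g

noncomputable def hA : FL n → A := FL.evq (fA g hn)

def uQ : FL n := FL.mk (FT.var none)

def vQ (k : Fin n) : FL n := FL.mk (FT.var (some k))

def Fsub : Set (FL n) := latticeClosure (Set.range (vQ (n := n)))

lemma hA_vQ (k : Fin n) : hA g hn (vQ k) = g k := rfl

lemma hA_uQ : hA g hn (uQ (n := n)) = oA g hn := rfl

lemma vQ_mem_Fsub (k : Fin n) : vQ k ∈ Fsub (n := n) :=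
  subset_latticeClosure ⟨k, rfl⟩

lemma oA_le_g (k : Fin n) : oA g hn ≤ g k := Finset.inf'_le g (Finset.mem_univ k)

lemma g_le_eA (k : Fin n) : g k ≤ eA g hn := Finset.le_sup' g (Finset.mem_univ k)

lemma oA_le_eA : oA g hn ≤ eA g hn := (oA_le_g g hn ⟨0, hn⟩).trans (g_le_eA g hn ⟨0, hn⟩)

lemma hA_le_eA (z : FL n) : hA g hn z ≤ eA g hn := by
  induction z using FL.ind with | _ p =>
  show FL.ev (fA g hn) p ≤ eA g hn
  induction p with
  | var x =>
    cases x with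
    | none => exact oA_le_eA g hn
    | some k => exact g_le_eA g hn k
  | jn a b iha ihb => exact sup_le iha ihb
  | mt a b iha ihb => exact inf_le_left.trans iha

lemma oA_le_hA {t : FL n} (ht : t ∈ Fsub (n := n)) : oA g hn ≤ hA g hn t := by
  have hsub : Fsub (n := n) ⊆ {t | oA g hn ≤ hA g hn t} := by
    refine latticeClosure_min ?_ ⟨?_, ?_⟩
    · rintro _ ⟨k, rfl⟩
      exact oA_le_g g hn k
    · intro a ha b hb
      show oA g hn ≤ hA g hn (a ⊔ b)
      rw [hA, FL.evq_sup]
      exact le_sup_of_le_left ha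
    · intro a ha b hb
      show oA g hn ≤ hA g hn (a ⊓ b)
      rw [hA, FL.evq_inf]
      exact le_inf ha hb
  exact hsub ht

lemma uQ_not_le {t : FL n} (ht : t ∈ Fsub (n := n)) : ¬ uQ (n := n) ≤ t := by
  intro hle
  set fB : Option (Fin n) → Bool := fun x => x.elim true (fun _ => false) with hfB
  have hsub : Fsub (n := n) ⊆ {t | FL.evq fB t = false} := by
    refine latticeClosure_min ?_ ⟨?_, ?_⟩
    · rintro _ ⟨k, rfl⟩; rfl
    · intro a ha b hb
      show FL.evq fB (a ⊔ b) = false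
      rw [FL.evq_sup, ha, hb]; rfl
    · intro a ha b hb
      show FL.evq fB (a ⊓ b) = false
      rw [FL.evq_inf, ha, hb]; rfl
  have h1 : FL.evq fB (uQ (n := n)) ≤ FL.evq fB t := FL.evq_mono fB hle
  have h2 : FL.evq fB (uQ (n := n)) = true := rfl
  rw [h2, hsub ht] at h1
  exact absurd h1 (by decide)

lemma not_le_uQ {t : FL n} (ht : t ∈ Fsub (n := n)) : ¬ t ≤ uQ (n := n) := by
  intro hle
  set fB : Option (Fin n) → Bool := fun x => x.elim false (fun _ => true) with hfB
  have hsub : Fsub (n := n) ⊆ {t | FL.evq fB t = true} := by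
    refine latticeClosure_min ?_ ⟨?_, ?_⟩
    · rintro _ ⟨k, rfl⟩; rfl
    · intro a ha b hb
      show FL.evq fB (a ⊔ b) = true
      rw [FL.evq_sup, ha, hb]; rfl
    · intro a ha b hb
      show FL.evq fB (a ⊓ b) = true
      rw [FL.evq_inf, ha, hb]; rfl
  have h1 : FL.evq fB t ≤ FL.evq fB (uQ (n := n)) := FL.evq_mono fB hle
  have h2 : FL.evq fB (uQ (n := n)) = false := rfl
  rw [h2, hsub ht] at h1
  exact absurd h1 (by decide)

/-- the inductively generated sublattice of pairs -/
inductive RR (G : Finset (A × LB.{v} n)) : A → FL n → Prop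
  | base (p : A × LB.{v} n) (hp : p ∈ G) (m : FL n) (h2 : p.2 = em m) : RR G p.1 m
  | supr {a b a' b'} : RR G a b → RR G a' b' → RR G (a ⊔ a') (b ⊔ b')
  | infr {a b a' b'} : RR G a b → RR G a' b' → RR G (a ⊓ a') (b ⊓ b')

end Main

lemma key (hweak : ∀ (L : Type v) [Lattice L] [OrderBot L], TensorIsLattice A L)
    {n : ℕ} (hn : 0 < n) (g : Fin n → A) :
    (latticeClosure (Set.range g)).Finite := by
  classical
  -- the finitely many pure tensors generating the "graph" bi-ideal
  set PT : Finset (A × LB.{v} n) :=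
    Finset.univ.image (fun k => (g k, em (vQ k))) with hPT
  set Iset : Set (A × LB.{v} n) := biIdealGen (⋃ p ∈ PT, pureTensor p.1 p.2) with hIset
  set uB : LB.{v} n := em (uQ (n := n)) with huB
  set Jset : Set (A × LB.{v} n) := pureTensor (eA g hn) uB with hJset
  set Eset : Set (A × LB.{v} n) := tensorBot A (LB.{v} n) ∪
      {z | ∃ m, z.2 = em m ∧ ∃ t ∈ Fsub (n := n), z.1 ≤ hA g hn t ∧ t ≤ m} with hEset
  have hEbi : IsBiIdeal Eset := by
    rw [hEset]
    refine isBiIdeal_emSet (fun x m => ∃ t ∈ Fsub (n := n), x ≤ hA g hn t ∧ t ≤ m) ?_ ?_ ?_ ?_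
    · rintro x x' m ⟨t, htF, h1, h2⟩ hle
      exact ⟨t, htF, hle.trans h1, h2⟩
    · rintro x m m' ⟨t, htF, h1, h2⟩ hle
      exact ⟨t, htF, h1, h2.trans hle⟩
    · rintro x x' m ⟨t, htF, h1, h2⟩ ⟨t', htF', h1', h2'⟩
      refine ⟨t ⊔ t', (isSublattice_latticeClosure).supClosed htF htF', ?_, sup_le h2 h2'⟩
      have : hA g hn t ⊔ hA g hn t' = hA g hn (t ⊔ t') := (FL.evq_sup _ _ _).symm
      exact sup_le (h1.trans (le_sup_left.trans this.le)) (h1'.trans (le_sup_right.trans this.le))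
    · rintro x m m' ⟨t, htF, h1, h2⟩ ⟨t', htF', h1', h2'⟩
      refine ⟨t ⊓ t', (isSublattice_latticeClosure).infClosed htF htF', ?_,
        inf_le_inf h2 h2'⟩
      have : hA g hn (t ⊓ t') = hA g hn t ⊓ hA g hn t' := FL.evq_inf _ _ _
      rw [this]
      exact le_inf h1 h1'
  have hIE : Iset = Eset := by
    refine le_antisymm (biIdealGen_min hEbi ?_) ?_
    · -- each generating pure tensor is contained in Eset
      intro z hz
      rw [Set.mem_iUnion₂] at hz
      obtain ⟨p, hp, hz⟩ := hz
      rw [hPT, Finset.mem_image] at hp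
      obtain ⟨k, -, rfl⟩ := hp
      rcases hz with hb | ⟨h1, h2⟩
      · exact Or.inl hb
      · rcases lb_cases z.2 with h | ⟨m, hm⟩
        · exact Or.inl (Or.inr h)
        · refine Or.inr ⟨m, hm, vQ k, vQ_mem_Fsub k, ?_, ?_⟩
          · rw [hA_vQ]; exact h1
          · rw [hm] at h2
            exact em_le_em.1 h2
    · -- Eset is contained in every bi-ideal containing the pure tensors
      rintro z (hz | ⟨m, hz2, t, htF, hz1, htm⟩) <;> intro I hI
      · exact hI.1.1 hz
      · obtain ⟨hIb, hIs⟩ := hI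
        have hkey : ∀ t ∈ Fsub (n := n), (hA g hn t, em.{v} t) ∈ I := by
          intro t ht
          have hsub : Fsub (n := n) ⊆ {t | (hA g hn t, em.{v} t) ∈ I} := by
            refine latticeClosure_min ?_ ⟨?_, ?_⟩
            · rintro _ ⟨k, rfl⟩
              have hmem : ((g k : A), em.{v} (vQ k)) ∈ pureTensor (g k) (em (vQ k)) :=
                mem_pureTensor_self _ _
              have hk : ((g k : A), em.{v} (vQ k)) ∈ PT :=
                Finset.mem_image_of_mem _ (Finset.mem_univ k)
              exact hIs (Set.mem_biUnion hk hmem)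
            · intro a ha b hb
              have d1 : (hA g hn a, em.{v} (a ⊔ b)) ∈ I :=
                hIb.2.1 _ ha _ le_rfl (em_le_em.2 le_sup_left)
              have d2 : (hA g hn b, em.{v} (a ⊔ b)) ∈ I :=
                hIb.2.1 _ hb _ le_rfl (em_le_em.2 le_sup_right)
              have d3 := hIb.2.2.2 _ _ _ d1 d2
              show (hA g hn (a ⊔ b), em.{v} (a ⊔ b)) ∈ I
              rw [hA, FL.evq_sup]
              exact d3
            · intro a ha b hb
              have d1 : (hA g hn a ⊓ hA g hn b, em.{v} a) ∈ I :=
                hIb.2.1 _ ha _ inf_le_left le_rfl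
              have d2 : (hA g hn a ⊓ hA g hn b, em.{v} b) ∈ I :=
                hIb.2.1 _ hb _ inf_le_right le_rfl
              have d3 := hIb.2.2.1 _ _ _ d1 d2
              rw [em_sup] at d3
              show (hA g hn (a ⊓ b), em.{v} (a ⊓ b)) ∈ I
              rw [hA, FL.evq_inf]
              exact d3
          exact hsub ht
        refine hIb.2.1 _ (hkey t htF) z hz1 ?_
        rw [hz2]
        exact em_le_em.2 htm
  have hIcomp : IsCompactBiIdeal Iset := ⟨PT, hIset⟩
  have hJcomp : IsCompactBiIdeal Jset := by
    refine ⟨{(eA g hn, uB)}, ?_⟩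
    have h1 : (⋃ p ∈ ({(eA g hn, uB)} : Finset (A × LB.{v} n)), pureTensor p.1 p.2)
        = pureTensor (eA g hn) uB := by
      simp
    rw [hJset, h1, biIdealGen_pureTensor]
  obtain ⟨G, hG⟩ := hweak (LB.{v} n) Iset Jset hIcomp hJcomp
  have hKbi : IsBiIdeal (Iset ∩ Jset) := by
    refine IsBiIdeal.inter ?_ ?_
    · rw [hIset]; exact isBiIdeal_biIdealGen _
    · rw [hJset]; exact isBiIdeal_pureTensor _ _
  -- membership criterion for K at non-bottom second coordinates
  have hmemK : ∀ (x : A) (m : FL n), (x, em.{v} m) ∈ Iset ∩ Jset ↔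
      (x = ⊥ ∨ ((∃ t ∈ Fsub (n := n), x ≤ hA g hn t ∧ t ≤ m) ∧ x ≤ eA g hn ∧ uQ (n := n) ≤ m)) := by
    intro x m
    constructor
    · rintro ⟨hxI, hxJ⟩
      rw [hIE, hEset] at hxI
      rcases hxI with hb | ⟨m', hm', t, htF, hx1, htm⟩
      · rcases hb with h | h
        · exact Or.inl h
        · exact absurd h (em_ne_bot m)
      · have hmm : m = m' := em_inj hm'
        rw [hJset] at hxJ
        rcases hxJ with hb | ⟨hx2, hy2⟩
        · rcases hb with h | h
          · exact Or.inl h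
          · exact absurd h (em_ne_bot m)
        · refine Or.inr ⟨⟨t, htF, hx1, hmm ▸ htm⟩, hx2, ?_⟩
          rw [huB] at hy2
          exact em_le_em.1 hy2
    · rintro (rfl | ⟨⟨t, htF, hx1, htm⟩, hx2, hu⟩)
      · constructor
        · rw [hIE, hEset]; exact Or.inl (Or.inl rfl)
        · rw [hJset]; exact Or.inl (Or.inl rfl)
      · constructor
        · rw [hIE, hEset]; exact Or.inr ⟨m, rfl, t, htF, hx1, htm⟩
        · rw [hJset]
          exact Or.inr ⟨hx2, huB ▸ em_le_em.2 hu⟩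
  -- every pair generated by RR lies in K
  have hRRK : ∀ {α : A} {β : FL n}, RR G α β → (α, em.{v} β) ∈ Iset ∩ Jset := by
    intro α β h
    induction h with
    | base p hp m h2 =>
      have hsub : pureTensor p.1 p.2 ⊆ Iset ∩ Jset := by
        intro z hz
        rw [hG]
        exact subset_biIdealGen (Set.mem_biUnion hp hz)
      refine hsub ?_
      rw [← h2]
      exact mem_pureTensor_self _ _
    | supr h1 h2 ih1 ih2 =>
      rename_i a b a' b'
      have d1 : (a, em.{v} (b ⊔ b')) ∈ Iset ∩ Jset :=
        hKbi.2.1 _ ih1 _ le_rfl (em_le_em.2 le_sup_left)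
      have d2 : (a', em.{v} (b ⊔ b')) ∈ Iset ∩ Jset :=
        hKbi.2.1 _ ih2 _ le_rfl (em_le_em.2 le_sup_right)
      exact hKbi.2.2.2 _ _ _ d1 d2
    | infr h1 h2 ih1 ih2 =>
      rename_i a b a' b'
      have d1 : (a ⊓ a', em.{v} b) ∈ Iset ∩ Jset :=
        hKbi.2.1 _ ih1 _ inf_le_left le_rfl
      have d2 : (a ⊓ a', em.{v} b') ∈ Iset ∩ Jset :=
        hKbi.2.1 _ ih2 _ inf_le_right le_rfl
      have d3 := hKbi.2.2.1 _ _ _ d1 d2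
      rwa [em_sup] at d3
  -- K is contained in the bi-ideal bound given by RR
  set Mset : Set (A × LB.{v} n) := tensorBot A (LB.{v} n) ∪
      {z | ∃ m, z.2 = em m ∧ ∃ α β, RR G α β ∧ z.1 ≤ α ∧ β ≤ m} with hMset
  have hMbi : IsBiIdeal Mset := by
    rw [hMset]
    refine isBiIdeal_emSet (fun x m => ∃ α β, RR G α β ∧ x ≤ α ∧ β ≤ m) ?_ ?_ ?_ ?_
    · rintro x x' m ⟨α, β, hR, h1, h2⟩ hle
      exact ⟨α, β, hR, hle.trans h1, h2⟩
    · rintro x m m' ⟨α, β, hR, h1, h2⟩ hle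
      exact ⟨α, β, hR, h1, h2.trans hle⟩
    · rintro x x' m ⟨α, β, hR, h1, h2⟩ ⟨α', β', hR', h1', h2'⟩
      exact ⟨α ⊔ α', β ⊔ β', RR.supr hR hR', sup_le (h1.trans le_sup_left)
        (h1'.trans le_sup_right), sup_le h2 h2'⟩
    · rintro x m m' ⟨α, β, hR, h1, h2⟩ ⟨α', β', hR', h1', h2'⟩
      exact ⟨α ⊓ α', β ⊓ β', RR.infr hR hR', le_inf h1 h1', inf_le_inf h2 h2'⟩
  have hKM : Iset ∩ Jset ⊆ Mset := by
    rw [hG]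
    refine biIdealGen_min hMbi ?_
    intro z hz
    rw [Set.mem_iUnion₂] at hz
    obtain ⟨p, hp, hz⟩ := hz
    rcases hz with hb | ⟨h1, h2⟩
    · exact hMbi.1 hb
    · rcases lb_cases z.2 with h | ⟨m, hm⟩
      · exact hMbi.1 (Or.inr h)
      · rcases lb_cases p.2 with h' | ⟨m₀, hm₀⟩
        · rw [h'] at h2
          have : z.2 = ⊥ := le_bot_iff.1 h2
          exact hMbi.1 (Or.inr this)
        · rw [hMset]
          refine Or.inr ⟨m, hm, p.1, m₀, RR.base p hp m₀ hm₀, h1, ?_⟩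
          rw [hm, hm₀] at h2
          exact em_le_em.1 h2
  -- the cap function
  set capP : FL n → (A × LB.{v} n) → Prop :=
    fun t p => ∃ m, p.2 = em.{v} m ∧ m ≤ t ⊔ uQ (n := n) with hcapP
  have hdec : ∀ t, DecidablePred (capP t) := fun t p => Classical.propDecidable _
  set capF : FL n → Finset (A × LB.{v} n) :=
    fun t => @Finset.filter _ (capP t) (hdec t) G with hcapF
  set cap : FL n → A := fun t => oA g hn ⊔ (capF t).sup Prod.fst with hcap
  -- the main induction
  have hmain : ∀ {α : A} {β : FL n}, RR G α β → ∀ t ∈ Fsub (n := n),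
      β ≤ t ⊔ uQ (n := n) → α ≤ cap t := by
    intro α β h
    induction h with
    | base p hp m h2 =>
      intro t htF hle
      have hmemf : p ∈ capF t := by
        rw [hcapF]
        exact @Finset.mem_filter _ (capP t) (hdec t) _ _ |>.2 ⟨hp, m, h2, hle⟩
      rw [hcap]
      exact le_sup_of_le_right (Finset.le_sup (f := Prod.fst) hmemf)
    | supr h1 h2 ih1 ih2 =>
      intro t htF hle
      exact sup_le (ih1 t htF (le_sup_left.trans hle)) (ih2 t htF (le_sup_right.trans hle))
    | infr h1 h2 ih1 ih2 =>
      rename_i a b a' b'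
      intro t htF hle
      rcases FL.whitman hle with hw | hw | hw | hw
      · exact inf_le_left.trans (ih1 t htF hw)
      · exact inf_le_right.trans (ih2 t htF hw)
      · have hk := hRRK (RR.infr h1 h2)
        rcases (hmemK _ _).1 hk with hbot | ⟨-, -, hu⟩
        · rw [hbot]; exact bot_le
        · exact absurd (hu.trans hw) (uQ_not_le htF)
      · have hk := hRRK (RR.infr h1 h2)
        rcases (hmemK _ _).1 hk with hbot | ⟨⟨t', ht'F, -, ht'm⟩, -, -⟩
        · rw [hbot]; exact bot_le
        · exact absurd (ht'm.trans hw) (not_le_uQ ht'F)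
  -- surjectivity of hA onto the lattice closure
  have hsurj : ∀ y ∈ latticeClosure (Set.range g), ∃ t ∈ Fsub (n := n), hA g hn t = y := by
    intro y hy
    have hsub : latticeClosure (Set.range g) ⊆ {y | ∃ t ∈ Fsub (n := n), hA g hn t = y} := by
      refine latticeClosure_min ?_ ⟨?_, ?_⟩
      · rintro _ ⟨k, rfl⟩
        exact ⟨vQ k, vQ_mem_Fsub k, rfl⟩
      · rintro a ⟨ta, htaF, rfl⟩ b ⟨tb, htbF, rfl⟩
        refine ⟨ta ⊔ tb, (isSublattice_latticeClosure).supClosed htaF htbF, ?_⟩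
        rw [hA, FL.evq_sup]
      · rintro a ⟨ta, htaF, rfl⟩ b ⟨tb, htbF, rfl⟩
        refine ⟨ta ⊓ tb, (isSublattice_latticeClosure).infClosed htaF htbF, ?_⟩
        rw [hA, FL.evq_inf]
    exact hsub hy
  -- each element of the closure is determined by a subset of G
  have hfin : ∀ y ∈ latticeClosure (Set.range g), y = ⊥ ∨
      ∃ G' ∈ G.powerset, y = oA g hn ⊔ G'.sup Prod.fst := by
    intro y hy
    obtain ⟨t, htF, hty⟩ := hsurj y hy
    have hyK : (y, em.{v} (t ⊔ uQ (n := n))) ∈ Iset ∩ Jset := by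
      refine (hmemK _ _).2 (Or.inr ⟨⟨t, htF, hty.ge, le_sup_left⟩, ?_, le_sup_right⟩)
      rw [← hty]
      exact hA_le_eA g hn t
    have hyM := hKM hyK
    rw [hMset] at hyM
    rcases hyM with hb | ⟨m, hm, α, β, hRR, hyα, hβm⟩
    · rcases hb with h | h
      · exact Or.inl h
      · exact absurd h (em_ne_bot _)
    · have hmeq : t ⊔ uQ (n := n) = m := em_inj hm
      right
      refine ⟨capF t, Finset.mem_powerset.2 ?_, ?_⟩
      · rw [hcapF]; exact Finset.filter_subset _ _
      have h1 : y ≤ cap t := hyα.trans (hmain hRR t htF (hmeq ▸ hβm))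
      have h2 : cap t ≤ y := by
        rw [hcap]
        refine sup_le ?_ (Finset.sup_le ?_)
        · rw [← hty]; exact oA_le_hA g hn htF
        · intro p hpf
          rw [hcapF] at hpf
          obtain ⟨hpG, m₀, hp2, hm₀⟩ := (@Finset.mem_filter _ (capP t) (hdec t) _ _).1 hpf
          have hpK : (p.1, em.{v} m₀) ∈ Iset ∩ Jset := hRRK (RR.base p hpG m₀ hp2)
          rcases (hmemK _ _).1 hpK with h | ⟨⟨t'', ht''F, hp1, ht''m⟩, -, -⟩
          · rw [h]; exact bot_le
          · have h3 : hA g hn t'' ≤ hA g hn (t ⊔ uQ (n := n)) :=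
              FL.evq_mono _ (ht''m.trans hm₀)
            have h4 : hA g hn (t ⊔ uQ (n := n)) = y := by
              rw [hA, FL.evq_sup]
              show hA g hn t ⊔ hA g hn (uQ (n := n)) = y
              rw [hA_uQ, hty]
              exact sup_eq_left.2 ((oA_le_hA g hn htF).trans hty.le)
            exact hp1.trans (h3.trans h4.le)
      rw [hcap] at h1 h2
      exact le_antisymm h1 h2
  -- conclude
  have hsub2 : latticeClosure (Set.range g) ⊆
      ↑(insert (⊥ : A) (G.powerset.image (fun G' => oA g hn ⊔ G'.sup Prod.fst))) := by
    intro y hy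
    rcases hfin y hy with rfl | ⟨G', hG', hy'⟩
    · simp
    · rw [Finset.coe_insert, Set.mem_insert_iff]
      refine Or.inr ?_
      rw [Finset.coe_image, Set.mem_image]
      exact ⟨G', hG', hy'.symm⟩
  exact Set.Finite.subset (Finset.finite_toSet _) hsub2

end GWmain


/-- a weakly amenable lattice with zero is locally finite. -/
theorem weakly_amenable_implies_locally_finite (A : Type u) [Lattice A] [OrderBot A]
    (hweak : ∀ (L : Type v) [Lattice L] [OrderBot L], TensorIsLattice A L) :
    IsLocallyFiniteLattice A := by
  intro s
  rcases s.eq_empty_or_nonempty with rfl | hs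
  · simp
  · have hn : 0 < s.card := Finset.card_pos.2 hs
    set g : Fin s.card → A := fun k => ((s.equivFin.symm k : s) : A) with hg
    have hrange : Set.range g = (s : Set A) := by
      ext y
      constructor
      · rintro ⟨k, rfl⟩
        exact (s.equivFin.symm k).2
      · intro hy
        refine ⟨s.equivFin ⟨y, hy⟩, ?_⟩
        show ((s.equivFin.symm (s.equivFin ⟨y, hy⟩) : s) : A) = y
        rw [Equiv.symm_apply_apply]
    have hfin := GWmain.key hweak hn g
    rwa [hrange] at hfin
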